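/- Let G = (V,E) be a finite simple graph, let A ⊊ V be a set with 4|A| ≤ |V∖A|, let α > 0, let σ be a real with 3|A|/|V∖A| ≤ σ ≤ 3/4, set ε_σ = σ/(3(1−σ)), and let c ≥ 0 be a real. Suppose that for every S ⊆ V it holds that δ_G(S)/α + |A∖S| + ε_σ·|S∖A| ≥ |A| − c. Then every nonempty proper subset S ⊊ V that is (A,σ)-overlapping and satisfies |S| ≥ 3c/σ has expansion φ_G(S) ≥ (σ/3)·α. -/
import Mathlib


/-- Edges of `G` with one endpoint in `S` and the other endpoint in `U \ S`:
the cut edges `∂(S)` of `S`, inside the subgraph of `G` induced by `U` (when `S ⊆ U`). -/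
def cutEdgesIn {V : Type*} (G : SimpleGraph V) (U S : Set V) : Set (Sym2 V) :=
  {e | e ∈ G.edgeSet ∧ ∃ u v, e = s(u, v) ∧ u ∈ S ∧ v ∈ U ∧ v ∉ S}

/-- `δ(S)`, the number of cut edges of `S` inside the subgraph induced by `U`. -/
noncomputable def deltaIn {V : Type*} (G : SimpleGraph V) (U S : Set V) : ℕ :=
  (cutEdgesIn G U S).ncard

/-- The expansion `φ(S)` of the cut `S` inside the subgraph of `G` induced by `U`. -/
noncomputable def phiIn {V : Type*} (G : SimpleGraph V) (U S : Set V) : ℝ :=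
  (deltaIn G U S : ℝ) / min (S.ncard : ℝ) ((U \ S).ncard : ℝ)

/-- With `A ⊊ V`, `4|A| ≤ |V ∖ A|`, `α > 0`, `3|A|/|V∖A| ≤ σ ≤ 3/4`,
`ε_σ = σ/(3(1−σ))` and `c ≥ 0`, if every `S ⊆ V` satisfies
`δ_G(S)/α + |A∖S| + ε_σ·|S∖A| ≥ |A| − c` (every cut of the augmented graph has capacity at
least the max-flow value `|A| − c`), then every nonempty proper `(A,σ)`-overlapping cut `S`
with `|S| ≥ 3c/σ` has expansion `φ_G(S) ≥ (σ/3)·α`. -/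
theorem stmt8 {V : Type*} [Fintype V] (G : SimpleGraph V) (A : Set V)
    (hAproper : A ≠ Set.univ) (hA : 4 * A.ncard ≤ Aᶜ.ncard)
    (α : ℝ) (hα : 0 < α) (σ : ℝ)
    (hσ1 : 3 * (A.ncard : ℝ) / (Aᶜ.ncard : ℝ) ≤ σ) (hσ2 : σ ≤ 3 / 4)
    (c : ℝ) (hc : 0 ≤ c)
    (hcap : ∀ S : Set V,
      (A.ncard : ℝ) - c ≤
        (deltaIn G Set.univ S : ℝ) / α + ((A \ S).ncard : ℝ) +
          (σ / (3 * (1 - σ))) * ((S \ A).ncard : ℝ))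
    (S : Set V) (hSne : S.Nonempty) (hSuniv : S ≠ Set.univ)
    (hover : σ * (S.ncard : ℝ) ≤ ((S ∩ A).ncard : ℝ))
    (hsize : 3 * c / σ ≤ (S.ncard : ℝ)) :
    (σ / 3) * α ≤ phiIn G Set.univ S := by
  have hSfin : S.Finite := S.toFinite
  have hSpos : (0:ℝ) < S.ncard := by
    exact_mod_cast (Set.ncard_pos hSfin).mpr hSne
  have hCne : (Set.univ \ S).Nonempty := by
    rw [Set.diff_nonempty]
    exact fun h => hSuniv (Set.eq_univ_of_univ_subset h)
  have hCpos : (0:ℝ) < (Set.univ \ S).ncard := by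
    exact_mod_cast (Set.ncard_pos (Set.univ \ S).toFinite).mpr hCne
  have hmpos : (0:ℝ) < min (S.ncard : ℝ) ((Set.univ \ S).ncard : ℝ) :=
    lt_min hSpos hCpos
  have hσ0 : 0 ≤ σ := le_trans (by positivity) hσ1
  rcases eq_or_lt_of_le hσ0 with h0 | hσpos
  · rw [← h0]
    simp only [zero_div, zero_mul]
    unfold phiIn
    positivity
  -- σ > 0 case
  have h1σ : (0:ℝ) < 1 - σ := by linarith
  set e : ℝ := σ / (3 * (1 - σ)) with he_def
  have he : e * (3 * (1 - σ)) = σ := by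
    rw [he_def]
    exact div_mul_cancel₀ σ (by positivity)
  have he0 : 0 ≤ e := by positivity
  have hcapS := hcap S
  have hAS : ((S ∩ A).ncard : ℝ) + ((A \ S).ncard : ℝ) = (A.ncard : ℝ) := by
    rw [Set.inter_comm]
    exact_mod_cast Set.ncard_inter_add_ncard_diff_eq_ncard A S A.toFinite
  have hSA : ((S ∩ A).ncard : ℝ) + ((S \ A).ncard : ℝ) = (S.ncard : ℝ) := by
    exact_mod_cast Set.ncard_inter_add_ncard_diff_eq_ncard S A hSfin
  have hcσ : 3 * c ≤ σ * (S.ncard : ℝ) := by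
    have := (div_le_iff₀ hσpos).mp hsize
    linarith [mul_comm σ (S.ncard : ℝ)]
  have hδα : (σ / 3) * (S.ncard : ℝ) ≤ (deltaIn G Set.univ S : ℝ) / α := by
    nlinarith [mul_le_mul_of_nonneg_left hover he0]
  have hδ : (σ / 3) * α * (S.ncard : ℝ) ≤ (deltaIn G Set.univ S : ℝ) := by
    have := (le_div_iff₀ hα).mp hδα
    linarith
  unfold phiIn
  rw [ge_iff_le.symm, ge_iff_le, le_div_iff₀ hmpos]
  have hmle : min (S.ncard : ℝ) ((Set.univ \ S).ncard : ℝ) ≤ (S.ncard : ℝ) :=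
    min_le_left _ _
  have hσα : 0 ≤ σ / 3 * α := by positivity
  nlinarith [mul_le_mul_of_nonneg_left hmle hσα]
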